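/- Let S ⊆ ℝ² be measurable with ∫_{ℝ²} 1_S(w)/|p − w| dw = π for almost every p ∈ ℝ². Then the function f : ℝ³ → ℝ defined by f(z) = ∫_{ℝ²} 1_S(w)/|z−w| dw (where ℝ² is embedded as the plane x₃ = 0 in ℝ³) is continuous on ℝ³. -/

import Mathlib

open MeasureTheory Real Set Topology intervalIntegral

section PotentialAux


lemma lemA (p R : ℝ) (hR : 0 < R) :
    IntegrableOn (fun x : ℝ => (Real.sqrt |p - x|)⁻¹) (Set.Icc (p - R) (p + R)) ∧
    ∫ x in Set.Icc (p - R) (p + R), (Real.sqrt |p - x|)⁻¹ = 4 * Real.sqrt R := by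
  have hfe : (fun x : ℝ => (Real.sqrt |p - x|)⁻¹) = fun x : ℝ => |x - p| ^ (-(2:ℝ)⁻¹) := by
    funext x
    rw [abs_sub_comm, Real.sqrt_eq_rpow, ← Real.rpow_neg (abs_nonneg _)]
    norm_num
  have h0R : IntervalIntegrable (fun u : ℝ => |u| ^ (-(2:ℝ)⁻¹)) volume 0 R := by
    have h := intervalIntegrable_rpow' (a := 0) (b := R) (r := -(2:ℝ)⁻¹) (by norm_num)
    rw [intervalIntegrable_iff] at h ⊢
    refine h.congr_fun (fun u hu => ?_) measurableSet_uIoc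
    rw [Set.uIoc_of_le hR.le] at hu
    rw [abs_of_pos hu.1]
  have hneg : IntervalIntegrable (fun u : ℝ => |u| ^ (-(2:ℝ)⁻¹)) volume (-R) 0 := by
    rw [IntervalIntegrable.iff_comp_neg]
    simpa using h0R.symm
  have hRR : IntervalIntegrable (fun u : ℝ => |u| ^ (-(2:ℝ)⁻¹)) volume (-R) R :=
    hneg.trans h0R
  have v1 : (∫ u in (0:ℝ)..R, |u| ^ (-(2:ℝ)⁻¹)) = 2 * Real.sqrt R := by
    have e1 : (∫ u in (0:ℝ)..R, |u| ^ (-(2:ℝ)⁻¹)) = ∫ u in (0:ℝ)..R, u ^ (-(2:ℝ)⁻¹) := by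
      apply intervalIntegral.integral_congr
      intro u hu
      rw [Set.uIcc_of_le hR.le] at hu
      show |u| ^ (-(2:ℝ)⁻¹) = u ^ (-(2:ℝ)⁻¹)
      rw [abs_of_nonneg hu.1]
    rw [e1, integral_rpow (Or.inl (by norm_num))]
    rw [Real.zero_rpow (by norm_num), Real.sqrt_eq_rpow]
    norm_num
    ring
  have v2 : (∫ u in (-R)..(0:ℝ), |u| ^ (-(2:ℝ)⁻¹)) = 2 * Real.sqrt R := by
    rw [← v1, ← neg_neg R, ← neg_zero]
    rw [← intervalIntegral.integral_comp_neg (fun u : ℝ => |u| ^ (-(2:ℝ)⁻¹))]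
    simp [abs_neg]
  have vtot : (∫ u in (-R)..R, |u| ^ (-(2:ℝ)⁻¹)) = 4 * Real.sqrt R := by
    rw [← intervalIntegral.integral_add_adjacent_intervals hneg h0R, v1, v2]; ring
  have hle : p - R ≤ p + R := by linarith
  have hII : IntervalIntegrable (fun x : ℝ => |x - p| ^ (-(2:ℝ)⁻¹)) volume (p - R) (p + R) := by
    have := hRR.comp_sub_right p
    have e : -R + p = p - R := by ring
    have e' : R + p = p + R := by ring
    rwa [e, e'] at this
  constructor
  · rw [hfe]
    exact (intervalIntegrable_iff_integrableOn_Icc_of_le hle).mp hII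
  · rw [hfe, MeasureTheory.integral_Icc_eq_integral_Ioc,
      ← intervalIntegral.integral_of_le hle,
      intervalIntegral.integral_comp_sub_right (fun u : ℝ => |u| ^ (-(2:ℝ)⁻¹)) p]
    have e : p - R - p = -R := by ring
    have e' : p + R - p = R := by ring
    rw [e, e', vtot]

lemma dist_cx (p w : ℝ × ℝ) :
    dist (⟨p.1, p.2⟩ : ℂ) (⟨w.1, w.2⟩ : ℂ) = Real.sqrt ((p.1 - w.1) ^ 2 + (p.2 - w.2) ^ 2) := by
  rw [Complex.dist_eq, Complex.norm_def, Complex.normSq_apply]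
  congr 1
  simp [Complex.sub_re, Complex.sub_im]
  ring


-- far inequality
lemma lemC (v q w : ℝ × ℝ) (t δ : ℝ) (hδ : 0 < δ)
    (h1 : |v.1 - q.1| ≤ δ) (h2 : |v.2 - q.2| ≤ δ)
    (hw : 2 * δ < |w.1 - q.1| ∨ 2 * δ < |w.2 - q.2|) (u : ℝ) (hu : 0 ≤ u) :
    u / Real.sqrt ((v.1 - w.1) ^ 2 + (v.2 - w.2) ^ 2 + t ^ 2)
      ≤ u * (4 / Real.sqrt ((q.1 - w.1) ^ 2 + (q.2 - w.2) ^ 2)) := by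
  set E := Real.sqrt ((q.1 - w.1) ^ 2 + (q.2 - w.2) ^ 2) with hE
  set D := Real.sqrt ((v.1 - w.1) ^ 2 + (v.2 - w.2) ^ 2 + t ^ 2) with hD
  have hEw : 2 * δ < E := by
    rcases hw with h | h
    · calc 2 * δ < |w.1 - q.1| := h
        _ = Real.sqrt ((q.1 - w.1) ^ 2) := by
            rw [Real.sqrt_sq_eq_abs, abs_sub_comm]
        _ ≤ E := Real.sqrt_le_sqrt (by nlinarith [sq_nonneg (q.2 - w.2)])
    · calc 2 * δ < |w.2 - q.2| := h
        _ = Real.sqrt ((q.2 - w.2) ^ 2) := by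
            rw [Real.sqrt_sq_eq_abs, abs_sub_comm]
        _ ≤ E := Real.sqrt_le_sqrt (by nlinarith [sq_nonneg (q.1 - w.1)])
  have hvq : Real.sqrt ((v.1 - q.1) ^ 2 + (v.2 - q.2) ^ 2) ≤ 3 / 2 * δ := by
    have : (v.1 - q.1) ^ 2 + (v.2 - q.2) ^ 2 ≤ (3 / 2 * δ) ^ 2 := by
      have e1 : (v.1 - q.1) ^ 2 ≤ δ ^ 2 := by
        rw [← sq_abs]; exact pow_le_pow_left₀ (abs_nonneg _) h1 2
      have e2 : (v.2 - q.2) ^ 2 ≤ δ ^ 2 := by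
        rw [← sq_abs]; exact pow_le_pow_left₀ (abs_nonneg _) h2 2
      nlinarith
    calc Real.sqrt ((v.1 - q.1) ^ 2 + (v.2 - q.2) ^ 2) ≤ Real.sqrt ((3 / 2 * δ) ^ 2) :=
          Real.sqrt_le_sqrt this
      _ = 3 / 2 * δ := Real.sqrt_sq (by positivity)
  -- triangle inequality via ℂ
  have htri : E ≤ Real.sqrt ((v.1 - q.1) ^ 2 + (v.2 - q.2) ^ 2)
      + Real.sqrt ((v.1 - w.1) ^ 2 + (v.2 - w.2) ^ 2) := by
    have := dist_triangle (⟨q.1, q.2⟩ : ℂ) (⟨v.1, v.2⟩ : ℂ) (⟨w.1, w.2⟩ : ℂ)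
    rw [dist_cx, dist_cx, dist_cx] at this
    rw [hE]
    calc Real.sqrt ((q.1 - w.1) ^ 2 + (q.2 - w.2) ^ 2)
        ≤ Real.sqrt ((q.1 - v.1) ^ 2 + (q.2 - v.2) ^ 2)
          + Real.sqrt ((v.1 - w.1) ^ 2 + (v.2 - w.2) ^ 2) := this
      _ = _ := by rw [show (q.1 - v.1) ^ 2 + (q.2 - v.2) ^ 2
            = (v.1 - q.1) ^ 2 + (v.2 - q.2) ^ 2 by ring]
  have hDbig : E / 4 ≤ D := by
    have h5 : Real.sqrt ((v.1 - w.1) ^ 2 + (v.2 - w.2) ^ 2) ≤ D := by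
      apply Real.sqrt_le_sqrt; nlinarith [sq_nonneg t]
    nlinarith
  have hDpos : 0 < D := by nlinarith
  have hEpos : 0 < E := by nlinarith
  have : 1 / D ≤ 4 / E := by
    rw [div_le_div_iff₀ hDpos hEpos]; nlinarith
  calc u / D = u * (1 / D) := by ring
    _ ≤ u * (4 / E) := by
        apply mul_le_mul_of_nonneg_left this hu


lemma line_null_1 (a : ℝ) : (volume : Measure (ℝ × ℝ)) {w : ℝ × ℝ | w.1 = a} = 0 := by
  have h : {w : ℝ × ℝ | w.1 = a} = ({a} : Set ℝ) ×ˢ (univ : Set ℝ) := by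
    ext ⟨x, y⟩; simp [Set.mem_prod, eq_comm]
  rw [h, Measure.volume_eq_prod, Measure.prod_prod, Real.volume_singleton, zero_mul]

lemma line_null_2 (a : ℝ) : (volume : Measure (ℝ × ℝ)) {w : ℝ × ℝ | w.2 = a} = 0 := by
  have h : {w : ℝ × ℝ | w.2 = a} = (univ : Set ℝ) ×ˢ ({a} : Set ℝ) := by
    ext ⟨x, y⟩; simp [Set.mem_prod, eq_comm]
  rw [h, Measure.volume_eq_prod, Measure.prod_prod, Real.volume_singleton, mul_zero]

lemma lemB (S : Set (ℝ × ℝ)) (hS : MeasurableSet S) (v q : ℝ × ℝ) (t δ : ℝ) (hδ : 0 < δ)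
    (h1 : |v.1 - q.1| ≤ δ) (h2 : |v.2 - q.2| ≤ δ) :
    IntegrableOn (fun w : ℝ × ℝ => S.indicator (fun _ => (1 : ℝ)) w
        / Real.sqrt ((v.1 - w.1) ^ 2 + (v.2 - w.2) ^ 2 + t ^ 2))
      (Set.Icc (q.1 - 2 * δ) (q.1 + 2 * δ) ×ˢ Set.Icc (q.2 - 2 * δ) (q.2 + 2 * δ)) ∧
    (∫ w in Set.Icc (q.1 - 2 * δ) (q.1 + 2 * δ) ×ˢ Set.Icc (q.2 - 2 * δ) (q.2 + 2 * δ),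
      S.indicator (fun _ => (1 : ℝ)) w
        / Real.sqrt ((v.1 - w.1) ^ 2 + (v.2 - w.2) ^ 2 + t ^ 2)) ≤ 48 * δ := by
  classical
  set Q : Set (ℝ × ℝ) := Set.Icc (q.1 - 2 * δ) (q.1 + 2 * δ) ×ˢ Set.Icc (q.2 - 2 * δ) (q.2 + 2 * δ)
    with hQdef
  set F : (ℝ × ℝ) → ℝ := fun w => S.indicator (fun _ => (1 : ℝ)) w
      / Real.sqrt ((v.1 - w.1) ^ 2 + (v.2 - w.2) ^ 2 + t ^ 2) with hFdef
  set G : (ℝ × ℝ) → ℝ := fun w => (Real.sqrt |v.1 - w.1|)⁻¹ * (Real.sqrt |v.2 - w.2|)⁻¹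
    with hGdef
  have hFnonneg : ∀ w, 0 ≤ F w := fun w =>
    div_nonneg (Set.indicator_nonneg (fun _ _ => zero_le_one) w) (Real.sqrt_nonneg _)
  have hGnonneg : ∀ w, 0 ≤ G w := fun w =>
    mul_nonneg (inv_nonneg.2 (Real.sqrt_nonneg _)) (inv_nonneg.2 (Real.sqrt_nonneg _))
  -- a.e. bound F ≤ G
  have hae : ∀ᵐ w : ℝ × ℝ, F w ≤ G w := by
    have hN : (volume : Measure (ℝ × ℝ)) ({w : ℝ × ℝ | w.1 = v.1} ∪ {w | w.2 = v.2}) = 0 :=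
      le_antisymm (le_trans (measure_union_le _ _)
        (by rw [line_null_1, line_null_2, add_zero])) zero_le
    rw [← MeasureTheory.compl_mem_ae_iff] at hN
    filter_upwards [hN] with w hw
    simp only [Set.mem_compl_iff, Set.mem_union, Set.mem_setOf_eq, not_or] at hw
    have hA : |v.1 - w.1| > 0 := abs_pos.2 (sub_ne_zero_of_ne (Ne.symm hw.1))
    have hB : |v.2 - w.2| > 0 := abs_pos.2 (sub_ne_zero_of_ne (Ne.symm hw.2))
    have hEpos : 0 < Real.sqrt (|v.1 - w.1| * |v.2 - w.2|) :=
      Real.sqrt_pos.2 (mul_pos hA hB)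
    have hED : Real.sqrt (|v.1 - w.1| * |v.2 - w.2|)
        ≤ Real.sqrt ((v.1 - w.1) ^ 2 + (v.2 - w.2) ^ 2 + t ^ 2) := by
      apply Real.sqrt_le_sqrt
      nlinarith [sq_abs (v.1 - w.1), sq_abs (v.2 - w.2), sq_nonneg t,
        sq_nonneg (|v.1 - w.1| - |v.2 - w.2|)]
    have hind : S.indicator (fun _ => (1 : ℝ)) w ≤ 1 := by
      unfold Set.indicator; split_ifs <;> norm_num
    calc F w ≤ 1 / Real.sqrt (|v.1 - w.1| * |v.2 - w.2|) :=
          div_le_div₀ zero_le_one hind hEpos hED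
      _ = G w := by
          rw [hGdef]
          simp only [one_div, Real.sqrt_mul (abs_nonneg _), mul_inv]
  have hGmeas : Measurable G := by fun_prop
  have hFmeas : Measurable F := by
    apply Measurable.div
    · exact measurable_const.indicator hS
    · fun_prop
  -- integrability of G on Q
  have hI1 : IntegrableOn (fun x : ℝ => (Real.sqrt |v.1 - x|)⁻¹)
      (Set.Icc (q.1 - 2 * δ) (q.1 + 2 * δ)) := by
    apply ((lemA v.1 (3 * δ) (by linarith)).1).mono_set
    have := abs_le.1 h1
    apply Set.Icc_subset_Icc <;> linarith [this.1, this.2]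
  have hI2 : IntegrableOn (fun x : ℝ => (Real.sqrt |v.2 - x|)⁻¹)
      (Set.Icc (q.2 - 2 * δ) (q.2 + 2 * δ)) := by
    apply ((lemA v.2 (3 * δ) (by linarith)).1).mono_set
    have := abs_le.1 h2
    apply Set.Icc_subset_Icc <;> linarith [this.1, this.2]
  have hGint : IntegrableOn G Q := by
    rw [hQdef, IntegrableOn, Measure.volume_eq_prod, ← Measure.prod_restrict]
    exact Integrable.mul_prod hI1 hI2
  have hFint : IntegrableOn F Q :=
    Integrable.mono' hGint hFmeas.aestronglyMeasurable.restrict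
      (ae_restrict_of_ae (hae.mono fun w hw => by
        rw [Real.norm_eq_abs, abs_of_nonneg (hFnonneg w)]; exact hw))
  refine ⟨hFint, ?_⟩
  have hmono : (∫ w in Q, F w) ≤ ∫ w in Q, G w :=
    setIntegral_mono_ae_restrict hFint hGint (ae_restrict_of_ae hae)
  have hb1 : (∫ x in Set.Icc (q.1 - 2 * δ) (q.1 + 2 * δ), (Real.sqrt |v.1 - x|)⁻¹)
      ≤ 4 * Real.sqrt (3 * δ) := by
    rw [← (lemA v.1 (3 * δ) (by linarith)).2]
    apply setIntegral_mono_set (lemA v.1 (3 * δ) (by linarith)).1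
      (Filter.Eventually.of_forall fun x => inv_nonneg.2 (Real.sqrt_nonneg _))
    apply Filter.Eventually.of_forall
    apply (Set.Icc_subset_Icc _ _)
    · have := abs_le.1 h1; linarith [this.1]
    · have := abs_le.1 h1; linarith [this.2]
  have hb2 : (∫ x in Set.Icc (q.2 - 2 * δ) (q.2 + 2 * δ), (Real.sqrt |v.2 - x|)⁻¹)
      ≤ 4 * Real.sqrt (3 * δ) := by
    rw [← (lemA v.2 (3 * δ) (by linarith)).2]
    apply setIntegral_mono_set (lemA v.2 (3 * δ) (by linarith)).1
      (Filter.Eventually.of_forall fun x => inv_nonneg.2 (Real.sqrt_nonneg _))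
    apply Filter.Eventually.of_forall
    apply (Set.Icc_subset_Icc _ _)
    · have := abs_le.1 h2; linarith [this.1]
    · have := abs_le.1 h2; linarith [this.2]
  have hGval : (∫ w in Q, G w)
      = (∫ x in Set.Icc (q.1 - 2 * δ) (q.1 + 2 * δ), (Real.sqrt |v.1 - x|)⁻¹)
        * ∫ x in Set.Icc (q.2 - 2 * δ) (q.2 + 2 * δ), (Real.sqrt |v.2 - x|)⁻¹ := by
    rw [hQdef, hGdef, Measure.volume_eq_prod]
    exact setIntegral_prod_mul (fun x : ℝ => (Real.sqrt |v.1 - x|)⁻¹) (fun y : ℝ => (Real.sqrt |v.2 - y|)⁻¹) _ _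
  have hnn1 : 0 ≤ ∫ x in Set.Icc (q.1 - 2 * δ) (q.1 + 2 * δ), (Real.sqrt |v.1 - x|)⁻¹ :=
    integral_nonneg fun x => inv_nonneg.2 (Real.sqrt_nonneg _)
  calc (∫ w in Q, F w) ≤ ∫ w in Q, G w := hmono
    _ ≤ (4 * Real.sqrt (3 * δ)) * (4 * Real.sqrt (3 * δ)) := by
        rw [hGval]
        exact mul_le_mul hb1 hb2 (integral_nonneg fun x => inv_nonneg.2 (Real.sqrt_nonneg _))
          (by positivity)
    _ = 48 * δ := by
        have : Real.sqrt (3 * δ) * Real.sqrt (3 * δ) = 3 * δ :=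
          Real.mul_self_sqrt (by linarith)
        nlinarith


lemma exists_good (S : Set (ℝ × ℝ))
    (hplane : ∀ᵐ p : ℝ × ℝ,
      ∫ w : ℝ × ℝ, S.indicator (fun _ => (1 : ℝ)) w
        / Real.sqrt ((p.1 - w.1) ^ 2 + (p.2 - w.2) ^ 2) = π)
    (p : ℝ × ℝ) (r : ℝ) (hr : 0 < r) :
    ∃ q : ℝ × ℝ, dist q p < r ∧
      Integrable (fun w : ℝ × ℝ => S.indicator (fun _ => (1 : ℝ)) w
        / Real.sqrt ((q.1 - w.1) ^ 2 + (q.2 - w.2) ^ 2)) := by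
  have hgood : ∀ᵐ q : ℝ × ℝ, Integrable (fun w : ℝ × ℝ => S.indicator (fun _ => (1 : ℝ)) w
      / Real.sqrt ((q.1 - w.1) ^ 2 + (q.2 - w.2) ^ 2)) := by
    filter_upwards [hplane] with p hp
    by_contra h
    rw [MeasureTheory.integral_undef h] at hp
    exact Real.pi_ne_zero hp.symm
  by_contra hno
  push_neg at hno
  have hsub : Metric.ball p r ⊆ {q : ℝ × ℝ | ¬ Integrable (fun w : ℝ × ℝ =>
      S.indicator (fun _ => (1 : ℝ)) w / Real.sqrt ((q.1 - w.1) ^ 2 + (q.2 - w.2) ^ 2))} := by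
    intro q hq
    exact hno q (Metric.mem_ball.1 hq)
  have h0 : volume (Metric.ball p r) = 0 :=
    measure_mono_null hsub (MeasureTheory.ae_iff.1 hgood)
  have hpos : 0 < volume (Metric.ball p r) := Metric.measure_ball_pos volume p hr
  rw [h0] at hpos
  exact lt_irrefl _ hpos

end PotentialAux

theorem potential_continuous
    (S : Set (ℝ × ℝ)) (hS : MeasurableSet S)
    (hplane : ∀ᵐ p : ℝ × ℝ,
      ∫ w : ℝ × ℝ, S.indicator (fun _ => (1 : ℝ)) w
        / Real.sqrt ((p.1 - w.1) ^ 2 + (p.2 - w.2) ^ 2) = π) :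
    Continuous (fun z : ℝ × ℝ × ℝ =>
      ∫ w : ℝ × ℝ, S.indicator (fun _ => (1 : ℝ)) w
        / Real.sqrt ((z.1 - w.1) ^ 2 + (z.2.1 - w.2) ^ 2 + z.2.2 ^ 2)) := by
  classical
  set ind : (ℝ × ℝ) → ℝ := fun w => S.indicator (fun _ => (1 : ℝ)) w with hind
  have hindnn : ∀ w, 0 ≤ ind w := fun w => Set.indicator_nonneg (fun _ _ => zero_le_one) w
  set F : (ℝ × ℝ × ℝ) → (ℝ × ℝ) → ℝ := fun z w =>
    ind w / Real.sqrt ((z.1 - w.1) ^ 2 + (z.2.1 - w.2) ^ 2 + z.2.2 ^ 2) with hF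
  have hFnn : ∀ z w, 0 ≤ F z w := fun z w =>
    div_nonneg (hindnn w) (Real.sqrt_nonneg _)
  have hFmeas : ∀ z, Measurable (F z) := by
    intro z
    apply Measurable.div
    · exact measurable_const.indicator hS
    · fun_prop
  rw [continuous_iff_continuousAt]
  intro z₀
  rw [ContinuousAt, Metric.tendsto_nhds]
  intro ε hε
  set δ : ℝ := ε / 300 with hδdef
  have hδ : 0 < δ := by positivity
  obtain ⟨q, hqdist, hqInt⟩ := exists_good S hplane (z₀.1, z₀.2.1) (δ / 2) (by positivity)
  set Q : Set (ℝ × ℝ) :=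
    Set.Icc (q.1 - 2 * δ) (q.1 + 2 * δ) ×ˢ Set.Icc (q.2 - 2 * δ) (q.2 + 2 * δ) with hQ
  have hQm : MeasurableSet Q := measurableSet_Icc.prod measurableSet_Icc
  have hq1 : |q.1 - z₀.1| ≤ δ / 2 := by
    have h : dist q.1 z₀.1 ≤ dist q (z₀.1, z₀.2.1) := by
      rw [Prod.dist_eq]; exact le_max_left _ _
    rw [Real.dist_eq] at h
    exact le_of_lt (lt_of_le_of_lt h hqdist)
  have hq2 : |q.2 - z₀.2.1| ≤ δ / 2 := by
    have h : dist q.2 z₀.2.1 ≤ dist q (z₀.1, z₀.2.1) := by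
      rw [Prod.dist_eq]; exact le_max_right _ _
    rw [Real.dist_eq] at h
    exact le_of_lt (lt_of_le_of_lt h hqdist)
  -- component estimates for z in the ball
  have hcomp : ∀ z : ℝ × ℝ × ℝ, dist z z₀ < δ / 2 →
      |z.1 - q.1| ≤ δ ∧ |z.2.1 - q.2| ≤ δ := by
    intro z hz
    have h1 : dist z.1 z₀.1 ≤ dist z z₀ := by
      rw [Prod.dist_eq]; exact le_max_left _ _
    have h2 : dist z.2.1 z₀.2.1 ≤ dist z z₀ := by
      rw [Prod.dist_eq (x := z), Prod.dist_eq (x := z.2)]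
      exact le_trans (le_max_left _ _) (le_max_right _ _)
    rw [Real.dist_eq] at h1 h2
    constructor
    · have := abs_sub_le z.1 z₀.1 q.1
      have h3 : |z₀.1 - q.1| ≤ δ / 2 := by rw [abs_sub_comm]; exact hq1
      linarith
    · have := abs_sub_le z.2.1 z₀.2.1 q.2
      have h3 : |z₀.2.1 - q.2| ≤ δ / 2 := by rw [abs_sub_comm]; exact hq2
      linarith
  have notQ : ∀ w : ℝ × ℝ, w ∉ Q → 2 * δ < |w.1 - q.1| ∨ 2 * δ < |w.2 - q.2| := by
    intro w hw
    by_contra hc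
    push_neg at hc
    have e1 := abs_le.1 hc.1
    have e2 := abs_le.1 hc.2
    exact hw ⟨Set.mem_Icc.2 ⟨by linarith [e1.1], by linarith [e1.2]⟩,
      Set.mem_Icc.2 ⟨by linarith [e2.1], by linarith [e2.2]⟩⟩
  -- the dominating function for the far part
  set bound : (ℝ × ℝ) → ℝ := fun w =>
    ind w * (4 / Real.sqrt ((q.1 - w.1) ^ 2 + (q.2 - w.2) ^ 2)) with hbounddef
  have hboundInt : Integrable bound (volume.restrict Qᶜ) := by
    have h4 : Integrable (fun w : ℝ × ℝ =>
        4 * (ind w / Real.sqrt ((q.1 - w.1) ^ 2 + (q.2 - w.2) ^ 2))) := hqInt.const_mul 4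
    have : bound = fun w : ℝ × ℝ =>
        4 * (ind w / Real.sqrt ((q.1 - w.1) ^ 2 + (q.2 - w.2) ^ 2)) := by
      funext w; rw [hbounddef]; ring
    rw [this]
    exact h4.restrict
  have hnormbnd : ∀ z : ℝ × ℝ × ℝ, |z.1 - q.1| ≤ δ → |z.2.1 - q.2| ≤ δ →
      ∀ᵐ w ∂(volume.restrict Qᶜ), ‖F z w‖ ≤ bound w := by
    intro z h1 h2
    rw [ae_restrict_iff' hQm.compl]
    apply Filter.Eventually.of_forall
    intro w hw
    rw [Real.norm_eq_abs, abs_of_nonneg (hFnn z w)]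
    exact lemC (z.1, z.2.1) q w z.2.2 δ hδ h1 h2 (notQ w hw) (ind w) (hindnn w)
  -- continuity of the far part
  have hfarCont : ContinuousAt (fun z : ℝ × ℝ × ℝ => ∫ w in Qᶜ, F z w) z₀ := by
    apply continuousAt_of_dominated (bound := bound)
    · exact Filter.Eventually.of_forall fun z => ((hFmeas z).aestronglyMeasurable).restrict
    · filter_upwards [Metric.ball_mem_nhds z₀ (by positivity : (0:ℝ) < δ / 2)] with z hz
      obtain ⟨h1, h2⟩ := hcomp z (Metric.mem_ball.1 hz)
      exact hnormbnd z h1 h2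
    · exact hboundInt
    · rw [ae_restrict_iff' hQm.compl]
      apply Filter.Eventually.of_forall
      intro w hw
      have hz₀Q : (z₀.1, z₀.2.1) ∈ Q := by
        have a1 := abs_le.1 hq1
        have a2 := abs_le.1 hq2
        exact ⟨Set.mem_Icc.2 ⟨by linarith [a1.1], by linarith [a1.2]⟩,
          Set.mem_Icc.2 ⟨by linarith [a2.1], by linarith [a2.2]⟩⟩
      have hwne : w.1 ≠ z₀.1 ∨ w.2 ≠ z₀.2.1 := by
        by_contra hc
        push_neg at hc
        apply hw
        have : w = (z₀.1, z₀.2.1) := Prod.ext hc.1 hc.2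
        rw [this]; exact hz₀Q
      have hpos : 0 < (z₀.1 - w.1) ^ 2 + (z₀.2.1 - w.2) ^ 2 + z₀.2.2 ^ 2 := by
        rcases hwne with h | h
        · have hne : z₀.1 - w.1 ≠ 0 := sub_ne_zero_of_ne (Ne.symm h)
          have hp : 0 < |z₀.1 - w.1| ^ 2 := pow_pos (abs_pos.2 hne) 2
          rw [sq_abs] at hp
          nlinarith [sq_nonneg (z₀.2.1 - w.2), sq_nonneg z₀.2.2]
        · have hne : z₀.2.1 - w.2 ≠ 0 := sub_ne_zero_of_ne (Ne.symm h)
          have hp : 0 < |z₀.2.1 - w.2| ^ 2 := pow_pos (abs_pos.2 hne) 2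
          rw [sq_abs] at hp
          nlinarith [sq_nonneg (z₀.1 - w.1), sq_nonneg z₀.2.2]
      have hsq : ContinuousAt (fun z : ℝ × ℝ × ℝ =>
          Real.sqrt ((z.1 - w.1) ^ 2 + (z.2.1 - w.2) ^ 2 + z.2.2 ^ 2)) z₀ := by
        apply Continuous.continuousAt
        fun_prop
      exact ContinuousAt.div continuousAt_const hsq (ne_of_gt (Real.sqrt_pos.2 hpos))
  have hfar' : ∀ᶠ z in 𝓝 z₀, dist ((fun z => ∫ w in Qᶜ, F z w) z)
      ((fun z => ∫ w in Qᶜ, F z w) z₀) < ε / 3 :=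
    Metric.tendsto_nhds.1 hfarCont (ε / 3) (by positivity)
  -- key decomposition
  have key : ∀ z : ℝ × ℝ × ℝ, dist z z₀ < δ / 2 →
      (∫ w, F z w) = (∫ w in Q, F z w) + (∫ w in Qᶜ, F z w) ∧
      0 ≤ (∫ w in Q, F z w) ∧ (∫ w in Q, F z w) ≤ 48 * δ := by
    intro z hz
    obtain ⟨h1, h2⟩ := hcomp z hz
    have hIQ : IntegrableOn (F z) Q := by
      have := (lemB S hS (z.1, z.2.1) q z.2.2 δ hδ h1 h2).1
      exact this
    have hIQc : IntegrableOn (F z) Qᶜ := by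
      apply Integrable.mono' hboundInt ((hFmeas z).aestronglyMeasurable).restrict
      exact hnormbnd z h1 h2
    have hint : Integrable (F z) := by
      have h := hIQ.union hIQc
      rwa [Set.union_compl_self, integrableOn_univ] at h
    refine ⟨(integral_add_compl hQm hint).symm, integral_nonneg (fun w => hFnn z w), ?_⟩
    exact (lemB S hS (z.1, z.2.1) q z.2.2 δ hδ h1 h2).2
  filter_upwards [hfar', Metric.ball_mem_nhds z₀ (by positivity : (0:ℝ) < δ / 2)] with z hfz hz
  have hzd : dist z z₀ < δ / 2 := Metric.mem_ball.1 hz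
  obtain ⟨e1, n1, b1⟩ := key z hzd
  obtain ⟨e0, n0, b0⟩ := key z₀ (by rw [dist_self]; positivity)
  rw [Real.dist_eq] at hfz ⊢
  have : (∫ w, F z w) - (∫ w, F z₀ w)
      = ((∫ w in Q, F z w) - (∫ w in Q, F z₀ w))
        + ((∫ w in Qᶜ, F z w) - (∫ w in Qᶜ, F z₀ w)) := by
    rw [e1, e0]; ring
  calc |(∫ w, F z w) - (∫ w, F z₀ w)|
      ≤ |(∫ w in Q, F z w) - (∫ w in Q, F z₀ w)|
        + |(∫ w in Qᶜ, F z w) - (∫ w in Qᶜ, F z₀ w)| := by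
        rw [this]; exact abs_add_le _ _
    _ < ε := by
        have hb : |(∫ w in Q, F z w) - (∫ w in Q, F z₀ w)| ≤ 48 * δ :=
          abs_le.2 ⟨by linarith, by linarith⟩
        have : 48 * δ + ε / 3 < ε := by rw [hδdef]; linarith
        linarith
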